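/- For every real number r > 0 and every real number x with 0 < |x| < r, one has ((r² − x²)/r²)^(r²/3) ≤ (tanh x)/x ≤ 1. -/

import Mathlib

open Real

lemma xsinh_nonneg (x : ℝ) : 0 ≤ x * Real.sinh x := by
  rcases le_or_gt 0 x with hx | hx
  · exact mul_nonneg hx (Real.sinh_nonneg_iff.mpr hx)
  · have h1 : Real.sinh x ≤ 0 := Real.sinh_nonpos_iff.mpr hx.le
    nlinarith

lemma k_mono : Monotone (fun x : ℝ => x * Real.cosh x - Real.sinh x) := by
  have hd : ∀ x : ℝ, HasDerivAt (fun x : ℝ => x * Real.cosh x - Real.sinh x)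
      (x * Real.sinh x) x := by
    intro x
    have h2 := ((hasDerivAt_id x).mul (Real.hasDerivAt_cosh x)).sub (Real.hasDerivAt_sinh x)
    refine h2.congr_deriv ?_
    simp only [id_eq]
    ring
  apply monotone_of_deriv_nonneg (fun x => (hd x).differentiableAt)
  intro x
  rw [(hd x).deriv]
  exact xsinh_nonneg x

lemma k_nonneg {x : ℝ} (hx : 0 ≤ x) : Real.sinh x ≤ x * Real.cosh x := by
  have := k_mono hx
  simp at this
  linarith

lemma h_mono : Monotone (fun x : ℝ => Real.sinh x * (3 + x ^ 2) - 3 * x * Real.cosh x) := by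
  have hd : ∀ x : ℝ, HasDerivAt (fun x : ℝ => Real.sinh x * (3 + x ^ 2) - 3 * x * Real.cosh x)
      (x * (x * Real.cosh x - Real.sinh x)) x := by
    intro x
    have h1 := (Real.hasDerivAt_sinh x).mul ((hasDerivAt_pow 2 x).const_add 3)
    have h2 := ((hasDerivAt_id x).const_mul 3).mul (Real.hasDerivAt_cosh x)
    have h3 := h1.sub h2
    refine h3.congr_deriv ?_
    simp only [id_eq]
    norm_num
    ring
  apply monotone_of_deriv_nonneg (fun x => (hd x).differentiableAt)
  intro x
  rw [(hd x).deriv]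
  rcases le_or_gt 0 x with hx | hx
  · have := k_nonneg hx
    exact mul_nonneg hx (by linarith)
  · have hk : x * Real.cosh x - Real.sinh x ≤ 0 := by
      have := k_mono hx.le
      simpa using this
    nlinarith

lemma h_nonneg {x : ℝ} (hx : 0 ≤ x) : 3 * x * Real.cosh x ≤ Real.sinh x * (3 + x ^ 2) := by
  have := h_mono hx
  simp at this
  linarith

theorem stmt_7 (r x : ℝ) (hr : 0 < r) (h0 : 0 < |x|) (h1 : |x| < r) :
    ((r ^ 2 - x ^ 2) / r ^ 2) ^ (r ^ 2 / 3) ≤ Real.tanh x / x ∧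
      Real.tanh x / x ≤ 1 := by
  have hxne : x ≠ 0 := abs_pos.mp h0
  set y := |x| with hy
  have hy0 : 0 < y := h0
  have htx : Real.tanh x / x = Real.tanh y / y := by
    rcases abs_cases x with ⟨h, _⟩ | ⟨h, _⟩
    · rw [hy, h]
    · rw [hy, h, Real.tanh_neg, neg_div_neg_eq]
  have hcosh : 0 < Real.cosh y := Real.cosh_pos y
  have hx2 : x ^ 2 = y ^ 2 := (sq_abs x).symm
  have hrpos : (0:ℝ) < r ^ 2 := by positivity
  have hbase : 0 < r ^ 2 - x ^ 2 := by
    rw [hx2]; nlinarith [hy0, h1]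
  constructor
  · -- lower bound
    have step1 : (r ^ 2 - x ^ 2) / r ^ 2 ≤ Real.exp (-(x ^ 2 / r ^ 2)) := by
      have := Real.add_one_le_exp (-(x ^ 2 / r ^ 2))
      have heq : (r ^ 2 - x ^ 2) / r ^ 2 = -(x ^ 2 / r ^ 2) + 1 := by
        field_simp
        ring
      linarith
    have step2 : ((r ^ 2 - x ^ 2) / r ^ 2) ^ (r ^ 2 / 3) ≤ Real.exp (-(x ^ 2 / 3)) := by
      calc ((r ^ 2 - x ^ 2) / r ^ 2) ^ (r ^ 2 / 3)
          ≤ (Real.exp (-(x ^ 2 / r ^ 2))) ^ (r ^ 2 / 3) :=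
            Real.rpow_le_rpow (by positivity) step1 (by positivity)
        _ = Real.exp (-(x ^ 2 / r ^ 2) * (r ^ 2 / 3)) := (Real.exp_mul _ _).symm
        _ = Real.exp (-(x ^ 2 / 3)) := by
            congr 1
            field_simp
    have step3 : Real.exp (-(y ^ 2 / 3)) ≤ 3 / (3 + y ^ 2) := by
      have h1 : (1 : ℝ) + y ^ 2 / 3 ≤ Real.exp (y ^ 2 / 3) := by
        have := Real.add_one_le_exp (y ^ 2 / 3); linarith
      rw [Real.exp_neg, inv_le_comm₀ (Real.exp_pos _) (by positivity), inv_div]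
      calc (3 + y ^ 2) / 3 = 1 + y ^ 2 / 3 := by ring
        _ ≤ Real.exp (y ^ 2 / 3) := h1
    have step4 : 3 / (3 + y ^ 2) ≤ Real.tanh y / y := by
      rw [Real.tanh_eq_sinh_div_cosh, div_div,
        div_le_div_iff₀ (by positivity) (by positivity)]
      have := h_nonneg hy0.le
      nlinarith
    rw [htx]
    calc ((r ^ 2 - x ^ 2) / r ^ 2) ^ (r ^ 2 / 3) ≤ Real.exp (-(x ^ 2 / 3)) := step2
      _ ≤ 3 / (3 + x ^ 2) := by rw [hx2]; exact step3
      _ ≤ Real.tanh y / y := by rw [hx2]; exact step4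
  · -- upper bound
    rw [htx, Real.tanh_eq_sinh_div_cosh, div_div, div_le_one (by positivity)]
    have := k_nonneg hy0.le
    nlinarith
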